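/- Let α : ℕ → ℕ with α(n) ≥ 1 and let 0 < δ < 1 be such that n/(w·α(n)) > 1 for all sufficiently large n and all w ∈ (1−δ, 1+δ), and assume α(n)/n → 0. Then there exist a constant C and N ∈ ℕ such that for all n ≥ N and all w ∈ (1−δ, 1+δ): (i) |h̃'_{n,α}(w) − ∑_{j=1}^{α(n)} x_{n,α}(w)^j/j| ≤ C; (ii) |h̃''_{n,α}(w) − n·x'_{n,α}(w)/(w·x_{n,α}(w))| ≤ C; (iii) |h̃'''_{n,α}(w) − ( n·x''_{n,α}(w)/(w·x_{n,α}(w)) − n·x'_{n,α}(w)/(w²·x_{n,α}(w)) − (n/w)·(x'_{n,α}(w)/x_{n,α}(w))² )| ≤ C. Here h̃', h̃'', h̃''' denote the first three derivatives of h̃_{n,α} and x', x'' the first two derivatives of w ↦ x_{n,α}(w). -/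

import Mathlib

namespace S13

lemma sum_shift (m : ℕ) (f : ℕ → ℝ) :
    ∑ i ∈ Finset.Icc 1 m, f i = ∑ i ∈ Finset.range m, f (i + 1) := by
  induction m with
  | zero => simp
  | succ k ih =>
      rw [Finset.sum_Icc_succ_top (by omega), ih, Finset.sum_range_succ]

lemma reflect (m : ℕ) (u : ℝ) (hu : 1 ≤ u) :
    ((m : ℝ) + 1) * ∑ j ∈ Finset.Icc 1 m, u ^ j
      ≤ 2 * ∑ j ∈ Finset.Icc 1 m, (j : ℝ) * u ^ j := by
  have key : 0 ≤ ∑ i ∈ Finset.range m, (2 * (i : ℝ) + 1 - m) * u ^ (i + 1) := by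
    have h2 : 2 * ∑ i ∈ Finset.range m, (2 * (i : ℝ) + 1 - m) * u ^ (i + 1)
        = ∑ i ∈ Finset.range m, ((2 * (i : ℝ) + 1 - m) * u ^ (i + 1)
            + (2 * ((m - 1 - i : ℕ) : ℝ) + 1 - m) * u ^ ((m - 1 - i) + 1)) := by
      rw [Finset.sum_add_distrib,
        Finset.sum_range_reflect (fun i => (2 * (i : ℝ) + 1 - m) * u ^ (i + 1)) m]
      ring
    have hterm : ∀ i ∈ Finset.range m,
        0 ≤ (2 * (i : ℝ) + 1 - m) * u ^ (i + 1)
            + (2 * ((m - 1 - i : ℕ) : ℝ) + 1 - m) * u ^ ((m - 1 - i) + 1) := by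
      intro i hi
      rw [Finset.mem_range] at hi
      have hc : ((m - 1 - i : ℕ) : ℝ) = (m : ℝ) - 1 - i := by
        have : m - 1 - i = m - (i + 1) := by omega
        rw [this, Nat.cast_sub (by omega)]
        push_cast; ring
      have hexp : (m - 1 - i) + 1 = m - i := by omega
      rw [hc, hexp]
      rcases le_or_gt m (2 * i + 1) with hcase | hcase
      · have hpow : u ^ (m - i) ≤ u ^ (i + 1) := pow_le_pow_right₀ hu (by omega)
        have hmr : (m : ℝ) ≤ 2 * i + 1 := by exact_mod_cast hcase
        nlinarith [hpow, hmr]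
      · have hpow : u ^ (i + 1) ≤ u ^ (m - i) := pow_le_pow_right₀ hu (by omega)
        have hmr : 2 * (i : ℝ) + 1 ≤ m := by exact_mod_cast hcase.le
        nlinarith [hpow, hmr]
    nlinarith [Finset.sum_nonneg hterm, h2]
  rw [sum_shift m (fun j => u ^ j), sum_shift m (fun j => (j : ℝ) * u ^ j)]
  have expand : 2 * (∑ i ∈ Finset.range m, ((i + 1 : ℕ) : ℝ) * u ^ (i + 1))
      - ((m : ℝ) + 1) * ∑ i ∈ Finset.range m, u ^ (i + 1)
      = ∑ i ∈ Finset.range m, (2 * (i : ℝ) + 1 - m) * u ^ (i + 1) := by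
    rw [Finset.mul_sum, Finset.mul_sum, ← Finset.sum_sub_distrib]
    apply Finset.sum_congr rfl
    intro i _
    push_cast; ring
  linarith [key, expand.ge, expand.le]

noncomputable def SS (m : ℕ) (E : ℝ → ℝ) (k : ℕ) (w : ℝ) : ℝ :=
  ∑ j ∈ Finset.Icc 1 m, (j : ℝ) ^ k * E w ^ j

noncomputable def TT (m : ℕ) (E : ℝ → ℝ) (w : ℝ) : ℝ :=
  ∑ j ∈ Finset.Icc 1 m, E w ^ j / j

def P (m : ℕ) (y : ℝ) : ℝ := ∑ j ∈ Finset.Icc 1 m, y ^ j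

noncomputable def EE1 (n m : ℕ) (E : ℝ → ℝ) (w : ℝ) : ℝ :=
  -((n : ℝ) * E w) / (w ^ 2 * SS m E 1 w)

noncomputable def EE2 (n m : ℕ) (E : ℝ → ℝ) (w : ℝ) : ℝ :=
  (n : ℝ) * E w * ((n : ℝ) * SS m E 1 w + 2 * w * (SS m E 1 w) ^ 2 - (n : ℝ) * SS m E 2 w)
    / (w ^ 4 * (SS m E 1 w) ^ 3)

noncomputable def GG (n m : ℕ) (E : ℝ → ℝ) (w : ℝ) : ℝ :=
  1 / w - (n : ℝ) * SS m E 2 w / (w ^ 2 * (SS m E 1 w) ^ 2)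

noncomputable def GG1 (n m : ℕ) (E : ℝ → ℝ) (w : ℝ) : ℝ :=
  -(1 / w ^ 2) + (n : ℝ) ^ 2 * SS m E 3 w / (w ^ 4 * (SS m E 1 w) ^ 3)
    + 2 * (n : ℝ) * SS m E 2 w / (w ^ 3 * (SS m E 1 w) ^ 2)
    - 2 * (n : ℝ) ^ 2 * (SS m E 2 w) ^ 2 / (w ^ 4 * (SS m E 1 w) ^ 4)

noncomputable def GG2 (n m : ℕ) (E : ℝ → ℝ) (w : ℝ) : ℝ :=
  2 / w ^ 3 - (n : ℝ) ^ 3 * SS m E 4 w / (w ^ 6 * (SS m E 1 w) ^ 4)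
    - 6 * (n : ℝ) ^ 2 * SS m E 3 w / (w ^ 5 * (SS m E 1 w) ^ 3)
    + 7 * (n : ℝ) ^ 3 * SS m E 2 w * SS m E 3 w / (w ^ 6 * (SS m E 1 w) ^ 5)
    - 6 * (n : ℝ) * SS m E 2 w / (w ^ 4 * (SS m E 1 w) ^ 2)
    + 12 * (n : ℝ) ^ 2 * (SS m E 2 w) ^ 2 / (w ^ 5 * (SS m E 1 w) ^ 4)
    - 8 * (n : ℝ) ^ 3 * (SS m E 2 w) ^ 3 / (w ^ 6 * (SS m E 1 w) ^ 6)

noncomputable def H1 (n m : ℕ) (E : ℝ → ℝ) (w : ℝ) : ℝ :=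
  TT m E w - GG n m E w / 2

noncomputable def H2 (n m : ℕ) (E : ℝ → ℝ) (w : ℝ) : ℝ :=
  (n : ℝ) * EE1 n m E w / (w * E w) - GG1 n m E w / 2

noncomputable def H3 (n m : ℕ) (E : ℝ → ℝ) (w : ℝ) : ℝ :=
  (n : ℝ) * EE2 n m E w / (w * E w) - (n : ℝ) * EE1 n m E w / (w ^ 2 * E w)
    - (n : ℝ) / w * (EE1 n m E w / E w) ^ 2 - GG2 n m E w / 2

variable {n m : ℕ} {E : ℝ → ℝ}

lemma SS_pos (k : ℕ) {w : ℝ} (hm : 1 ≤ m) (hEw : 0 < E w) : 0 < SS m E k w := by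
  apply Finset.sum_pos _ (Finset.nonempty_Icc.mpr hm)
  intro j hj
  rw [Finset.mem_Icc] at hj
  have : (0:ℝ) < (j:ℝ) := by exact_mod_cast hj.1
  positivity

lemma SS_succ_le (k : ℕ) {w : ℝ} (hEw : 0 < E w) :
    SS m E (k+1) w ≤ (m : ℝ) * SS m E k w := by
  rw [SS, SS, Finset.mul_sum]
  apply Finset.sum_le_sum
  intro j hj
  rw [Finset.mem_Icc] at hj
  have hjm : (j : ℝ) ≤ (m : ℝ) := by exact_mod_cast hj.2
  have h1 : (0:ℝ) ≤ (j:ℝ)^k * E w ^ j := by positivity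
  calc (j:ℝ)^(k+1) * E w ^ j = (j:ℝ) * ((j:ℝ)^k * E w ^ j) := by ring
    _ ≤ (m:ℝ) * ((j:ℝ)^k * E w ^ j) := mul_le_mul_of_nonneg_right hjm h1

lemma SS_reflect {w : ℝ} (hm : 1 ≤ m) (hu : 1 ≤ E w) :
    (m : ℝ) * SS m E 0 w ≤ 2 * SS m E 1 w := by
  have h := reflect m (E w) hu
  have h0 : SS m E 0 w = ∑ j ∈ Finset.Icc 1 m, E w ^ j := by
    rw [SS]; exact Finset.sum_congr rfl fun j _ => by rw [pow_zero, one_mul]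
  have h1 : SS m E 1 w = ∑ j ∈ Finset.Icc 1 m, (j:ℝ) * E w ^ j := by
    rw [SS]; exact Finset.sum_congr rfl fun j _ => by rw [pow_one]
  have hS0 : 0 ≤ ∑ j ∈ Finset.Icc 1 m, E w ^ j :=
    Finset.sum_nonneg fun j _ => by positivity
  rw [h0, h1]
  nlinarith [h, hS0]

lemma P_lt (hm : 1 ≤ m) {a b : ℝ} (ha : 0 ≤ a) (hab : a < b) : P m a < P m b := by
  apply Finset.sum_lt_sum_of_nonempty (Finset.nonempty_Icc.mpr hm)
  intro j hj
  rw [Finset.mem_Icc] at hj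
  exact pow_lt_pow_left₀ hab ha (by omega)

lemma P_le {a b : ℝ} (ha : 0 ≤ a) (hab : a ≤ b) : P m a ≤ P m b :=
  Finset.sum_le_sum fun j _ => pow_le_pow_left₀ ha hab j

lemma contE (hm : 1 ≤ m)
    (hE : ∀ w : ℝ, 0 < w → 0 < E w ∧ P m (E w) = (n : ℝ) / w)
    {w : ℝ} (hw : 0 < w) : ContinuousAt E w := by
  have hcont : ContinuousAt (fun w' : ℝ => (n : ℝ) / w') w :=
    continuousAt_const.div continuousAt_id hw.ne'
  rw [ContinuousAt, tendsto_order]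
  constructor
  · intro a ha
    rcases le_or_gt a 0 with h0 | h0
    · filter_upwards [eventually_gt_nhds hw] with w' hw'
      exact lt_of_le_of_lt h0 (hE w' hw').1
    · have hPa : P m a < (n : ℝ) / w := by
        rw [← (hE w hw).2]; exact P_lt hm h0.le ha
      filter_upwards [hcont.eventually (eventually_gt_nhds hPa), eventually_gt_nhds hw]
        with w' h1 h2
      by_contra hcon
      push_neg at hcon
      have := P_le (m := m) (hE w' h2).1.le hcon
      rw [(hE w' h2).2] at this
      exact absurd (lt_of_lt_of_le h1 this) (lt_irrefl _)
  · intro b hb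
    have hPb : (n : ℝ) / w < P m b := by
      rw [← (hE w hw).2]; exact P_lt hm (hE w hw).1.le hb
    filter_upwards [hcont.eventually (eventually_lt_nhds hPb), eventually_gt_nhds hw]
      with w' h1 h2
    by_contra hcon
    push_neg at hcon
    have := P_le (m := m) (le_trans (hE w hw).1.le hb.le) hcon
    rw [(hE w' h2).2] at this
    exact absurd (lt_of_lt_of_le h1 this) (lt_irrefl _)

lemma hasDerivAt_E (hm : 1 ≤ m) (hn : 1 ≤ n)
    (hE : ∀ w : ℝ, 0 < w → 0 < E w ∧ P m (E w) = (n : ℝ) / w)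
    {w : ℝ} (hw : 0 < w) : HasDerivAt E (EE1 n m E w) w := by
  obtain ⟨hEw, hsum⟩ := hE w hw
  have hnR : (0:ℝ) < n := by exact_mod_cast hn
  have hS1pos : 0 < SS m E 1 w := SS_pos 1 hm hEw
  have hP : HasDerivAt (P m) (∑ j ∈ Finset.Icc 1 m, (j:ℝ) * E w ^ (j-1)) (E w) :=
    HasDerivAt.fun_sum fun j _ => hasDerivAt_pow j (E w)
  have hPsum_eq : (∑ j ∈ Finset.Icc 1 m, (j:ℝ) * E w ^ (j-1)) = SS m E 1 w / E w := by
    rw [SS, Finset.sum_div]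
    apply Finset.sum_congr rfl
    intro j hj
    rw [Finset.mem_Icc] at hj
    rw [pow_one, eq_div_iff hEw.ne', mul_assoc, ← pow_succ]
    congr 2
    omega
  have hPne : P m (E w) ≠ 0 := by rw [hsum]; positivity
  have hf : HasDerivAt (fun y => (n:ℝ) / P m y)
      ((0 * P m (E w) - (n:ℝ) * (∑ j ∈ Finset.Icc 1 m, (j:ℝ) * E w ^ (j-1))) / (P m (E w))^2)
      (E w) := (hasDerivAt_const (E w) (n:ℝ)).div hP hPne
  have hne : (0 * P m (E w) - (n:ℝ) * (∑ j ∈ Finset.Icc 1 m, (j:ℝ) * E w ^ (j-1))) / (P m (E w))^2 ≠ 0 := by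
    rw [hPsum_eq, hsum]
    have h1 : (0:ℝ) < SS m E 1 w / E w := by positivity
    have h2 : (0:ℝ) < ((n:ℝ)/w)^2 := by positivity
    apply div_ne_zero _ h2.ne'
    nlinarith
  have hfg : ∀ᶠ w' in nhds w, (fun y => (n:ℝ) / P m y) (E w') = w' := by
    filter_upwards [eventually_gt_nhds hw] with w' hw'
    have := (hE w' hw').2
    simp only [this]
    rw [div_div_eq_mul_div, mul_comm, mul_div_assoc, div_self hnR.ne', mul_one]
  have := HasDerivAt.of_local_left_inverse (contE hm hE hw) hf hne hfg
  refine this.congr_deriv (Eq.symm ?_)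
  rw [hPsum_eq, hsum, EE1]
  field_simp
  ring


lemma EE1_div (hn : 1 ≤ n) {w : ℝ} (hEw : 0 < E w) (hS1 : 0 < SS m E 1 w) (hw : 0 < w) :
    EE1 n m E w / E w = -(n:ℝ) / (w ^ 2 * SS m E 1 w) := by
  rw [EE1]
  field_simp

lemma hasDerivAt_SS (hm : 1 ≤ m) (hn : 1 ≤ n)
    (hE : ∀ w : ℝ, 0 < w → 0 < E w ∧ P m (E w) = (n : ℝ) / w)
    (k : ℕ) {w : ℝ} (hw : 0 < w) :
    HasDerivAt (SS m E k) (-(n:ℝ) * SS m E (k+1) w / (w ^ 2 * SS m E 1 w)) w := by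
  obtain ⟨hEw, hsum⟩ := hE w hw
  have hS1 : 0 < SS m E 1 w := SS_pos 1 hm hEw
  have hD := hasDerivAt_E hm hn hE hw
  have hsd : HasDerivAt (SS m E k)
      (∑ j ∈ Finset.Icc 1 m, (j:ℝ)^k * ((j:ℝ) * E w ^ (j-1) * EE1 n m E w)) w := by
    apply HasDerivAt.fun_sum
    intro j _
    exact (hD.pow j).const_mul _
  convert hsd using 1
  have step : ∀ j ∈ Finset.Icc 1 m,
      (j:ℝ)^k * ((j:ℝ) * E w ^ (j-1) * EE1 n m E w)
        = (EE1 n m E w / E w) * ((j:ℝ)^(k+1) * E w ^ j) := by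
    intro j hj
    rw [Finset.mem_Icc] at hj
    have hEj : E w ^ (j - 1) * E w = E w ^ j := by
      rw [← pow_succ]; congr 1; omega
    field_simp
    rw [← hEj]
    ring
  rw [Finset.sum_congr rfl step, ← Finset.mul_sum]
  rw [show (∑ j ∈ Finset.Icc 1 m, (j:ℝ)^(k+1) * E w ^ j) = SS m E (k+1) w from rfl]
  rw [EE1_div hn hEw hS1 hw]
  ring

lemma hasDerivAt_TT (hm : 1 ≤ m) (hn : 1 ≤ n)
    (hE : ∀ w : ℝ, 0 < w → 0 < E w ∧ P m (E w) = (n : ℝ) / w)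
    {w : ℝ} (hw : 0 < w) :
    HasDerivAt (TT m E) (-(n:ℝ) * SS m E 0 w / (w ^ 2 * SS m E 1 w)) w := by
  obtain ⟨hEw, hsum⟩ := hE w hw
  have hS1 : 0 < SS m E 1 w := SS_pos 1 hm hEw
  have hD := hasDerivAt_E hm hn hE hw
  have hsd : HasDerivAt (TT m E)
      (∑ j ∈ Finset.Icc 1 m, ((j:ℝ) * E w ^ (j-1) * EE1 n m E w) / j) w := by
    apply HasDerivAt.fun_sum
    intro j _
    exact (hD.pow j).div_const _
  convert hsd using 1
  have step : ∀ j ∈ Finset.Icc 1 m,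
      ((j:ℝ) * E w ^ (j-1) * EE1 n m E w) / j
        = (EE1 n m E w / E w) * ((j:ℝ)^0 * E w ^ j) := by
    intro j hj
    rw [Finset.mem_Icc] at hj
    have hj0 : (j:ℝ) ≠ 0 := by
      have : (0:ℝ) < (j:ℝ) := by exact_mod_cast hj.1
      exact this.ne'
    have hEj : E w ^ (j - 1) * E w = E w ^ j := by
      rw [← pow_succ]; congr 1; omega
    rw [pow_zero, one_mul]
    field_simp
    rw [← hEj]
    ring
  rw [Finset.sum_congr rfl step, ← Finset.mul_sum]
  rw [show (∑ j ∈ Finset.Icc 1 m, (j:ℝ)^0 * E w ^ j) = SS m E 0 w from rfl]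
  rw [EE1_div hn hEw hS1 hw]
  ring


lemma hasDerivAt_GG (hm : 1 ≤ m) (hn : 1 ≤ n)
    (hE : ∀ w : ℝ, 0 < w → 0 < E w ∧ P m (E w) = (n : ℝ) / w)
    {w : ℝ} (hw : 0 < w) : HasDerivAt (GG n m E) (GG1 n m E w) w := by
  obtain ⟨hEw, hsum⟩ := hE w hw
  have hS1 : 0 < SS m E 1 w := SS_pos 1 hm hEw
  have hdenne : w^2*(SS m E 1 w)^2 ≠ 0 := by positivity
  have ha : HasDerivAt (fun w' : ℝ => 1/w') (-(1/w^2)) w := by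
    simpa [one_div] using hasDerivAt_inv hw.ne'
  have h := ha.sub (((hasDerivAt_SS hm hn hE 2 hw).const_mul (n:ℝ)).div
    ((hasDerivAt_pow 2 w).mul ((hasDerivAt_SS hm hn hE 1 hw).pow 2)) hdenne)
  refine h.congr_deriv (Eq.symm ?_)
  rw [GG1]
  simp only [Pi.mul_apply, Pi.pow_apply, Pi.neg_apply, Pi.div_apply, Pi.add_apply, Pi.sub_apply, id_eq, Nat.cast_ofNat, Nat.reduceAdd, Nat.reduceSub]
  field_simp
  ring


lemma hasDerivAt_GG1 (hm : 1 ≤ m) (hn : 1 ≤ n)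
    (hE : ∀ w : ℝ, 0 < w → 0 < E w ∧ P m (E w) = (n : ℝ) / w)
    {w : ℝ} (hw : 0 < w) : HasDerivAt (GG1 n m E) (GG2 n m E w) w := by
  obtain ⟨hEw, hsum⟩ := hE w hw
  have hS1 : 0 < SS m E 1 w := SS_pos 1 hm hEw
  have hne1 : w^2 ≠ 0 := by positivity
  have hne2 : w^4*(SS m E 1 w)^3 ≠ 0 := by positivity
  have hne3 : w^3*(SS m E 1 w)^2 ≠ 0 := by positivity
  have hne4 : w^4*(SS m E 1 w)^4 ≠ 0 := by positivity
  have t0 := (((hasDerivAt_const w (1:ℝ)).div (hasDerivAt_pow 2 w) hne1)).neg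
  have t1 := ((hasDerivAt_SS hm hn hE 3 hw).const_mul ((n:ℝ)^2)).div
    ((hasDerivAt_pow 4 w).mul ((hasDerivAt_SS hm hn hE 1 hw).pow 3)) hne2
  have t2 := ((hasDerivAt_SS hm hn hE 2 hw).const_mul (2*(n:ℝ))).div
    ((hasDerivAt_pow 3 w).mul ((hasDerivAt_SS hm hn hE 1 hw).pow 2)) hne3
  have t3 := (((hasDerivAt_SS hm hn hE 2 hw).pow 2).const_mul (2*(n:ℝ)^2)).div
    ((hasDerivAt_pow 4 w).mul ((hasDerivAt_SS hm hn hE 1 hw).pow 4)) hne4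
  have h := ((t0.add t1).add t2).sub t3
  refine h.congr_deriv (Eq.symm ?_)
  rw [GG2]
  simp only [Pi.mul_apply, Pi.pow_apply, Pi.neg_apply, Pi.div_apply, Pi.add_apply, Pi.sub_apply, id_eq, Nat.cast_ofNat, Nat.reduceAdd, Nat.reduceSub]
  field_simp
  ring

lemma hasDerivAt_EE1 (hm : 1 ≤ m) (hn : 1 ≤ n)
    (hE : ∀ w : ℝ, 0 < w → 0 < E w ∧ P m (E w) = (n : ℝ) / w)
    {w : ℝ} (hw : 0 < w) : HasDerivAt (EE1 n m E) (EE2 n m E w) w := by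
  obtain ⟨hEw, hsum⟩ := hE w hw
  have hS1 : 0 < SS m E 1 w := SS_pos 1 hm hEw
  have hne : w^2 * SS m E 1 w ≠ 0 := by positivity
  have h := (((hasDerivAt_E hm hn hE hw).const_mul (n:ℝ)).neg).div
    ((hasDerivAt_pow 2 w).mul (hasDerivAt_SS hm hn hE 1 hw)) hne
  refine h.congr_deriv (Eq.symm ?_)
  rw [EE2, EE1]
  simp only [Pi.mul_apply, Pi.pow_apply, Pi.neg_apply, Pi.div_apply, Pi.add_apply, Pi.sub_apply, id_eq, Nat.cast_ofNat, Nat.reduceAdd, Nat.reduceSub]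
  field_simp
  ring


lemma SS0_eq {w : ℝ} (hE : ∀ w : ℝ, 0 < w → 0 < E w ∧ P m (E w) = (n : ℝ) / w)
    (hw : 0 < w) : SS m E 0 w = (n : ℝ) / w := by
  rw [← (hE w hw).2, SS, P]
  exact Finset.sum_congr rfl fun j _ => by rw [pow_zero, one_mul]

lemma hasDerivAt_F (hm : 1 ≤ m) (hn : 1 ≤ n)
    (hE : ∀ w : ℝ, 0 < w → 0 < E w ∧ P m (E w) = (n : ℝ) / w)
    {w : ℝ} (hw : 0 < w) :
    HasDerivAt (fun w' => w' * TT m E w' - (n : ℝ) * Real.log (E w')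
      - 1 / 2 * Real.log (2 * Real.pi * w' * SS m E 1 w')) (H1 n m E w) w := by
  obtain ⟨hEw, hsum⟩ := hE w hw
  have hS1 : 0 < SS m E 1 w := SS_pos 1 hm hEw
  have hS0 : SS m E 0 w = (n:ℝ)/w := SS0_eq hE hw
  have hnR : (0:ℝ) < n := by exact_mod_cast hn
  have p1 := (hasDerivAt_id w).mul (hasDerivAt_TT hm hn hE hw)
  have p2 := ((hasDerivAt_E hm hn hE hw).log hEw.ne').const_mul (n:ℝ)
  have hinne : 2 * Real.pi * w * SS m E 1 w ≠ 0 := by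
    have := Real.pi_pos
    positivity
  have p3 := ((((hasDerivAt_id w).const_mul (2*Real.pi)).mul
    (hasDerivAt_SS hm hn hE 1 hw)).log hinne).const_mul (1/2 : ℝ)
  have h := (p1.sub p2).sub p3
  refine h.congr_deriv (Eq.symm ?_)
  rw [H1, GG, TT, EE1, hS0]
  have hpi := Real.pi_ne_zero
  simp only [Pi.mul_apply, Pi.pow_apply, Pi.neg_apply, Pi.div_apply, Pi.add_apply, Pi.sub_apply, id_eq, Nat.cast_ofNat, Nat.reduceAdd, Nat.reduceSub]
  field_simp
  ring

lemma hasDerivAt_H1 (hm : 1 ≤ m) (hn : 1 ≤ n)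
    (hE : ∀ w : ℝ, 0 < w → 0 < E w ∧ P m (E w) = (n : ℝ) / w)
    {w : ℝ} (hw : 0 < w) : HasDerivAt (H1 n m E) (H2 n m E w) w := by
  obtain ⟨hEw, hsum⟩ := hE w hw
  have hS1 : 0 < SS m E 1 w := SS_pos 1 hm hEw
  have hS0 : SS m E 0 w = (n:ℝ)/w := SS0_eq hE hw
  have h := (hasDerivAt_TT hm hn hE hw).sub ((hasDerivAt_GG hm hn hE hw).div_const 2)
  refine h.congr_deriv (Eq.symm ?_)
  rw [H2, EE1, hS0]
  field_simp

lemma hasDerivAt_H2 (hm : 1 ≤ m) (hn : 1 ≤ n)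
    (hE : ∀ w : ℝ, 0 < w → 0 < E w ∧ P m (E w) = (n : ℝ) / w)
    {w : ℝ} (hw : 0 < w) : HasDerivAt (H2 n m E) (H3 n m E w) w := by
  obtain ⟨hEw, hsum⟩ := hE w hw
  have hS1 : 0 < SS m E 1 w := SS_pos 1 hm hEw
  have hne : w * E w ≠ 0 := by positivity
  have h := (((hasDerivAt_EE1 hm hn hE hw).const_mul (n:ℝ)).div
    ((hasDerivAt_id w).mul (hasDerivAt_E hm hn hE hw)) hne).sub
    ((hasDerivAt_GG1 hm hn hE hw).div_const 2)
  refine h.congr_deriv (Eq.symm ?_)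
  rw [H3, EE2, EE1]
  simp only [Pi.mul_apply, Pi.pow_apply, Pi.neg_apply, Pi.div_apply, Pi.add_apply, Pi.sub_apply, id_eq, Nat.cast_ofNat, Nat.reduceAdd, Nat.reduceSub]
  field_simp
  ring


lemma tri (a b : ℝ) : |a - b| ≤ |a| + |b| := by
  rw [sub_eq_add_neg]
  exact (abs_add_le _ _).trans (by rw [abs_neg])

lemma tri' (a b : ℝ) : |a + b| ≤ |a| + |b| := abs_add_le a b

set_option maxHeartbeats 3000000 in
lemma GG_bound (hm : 1 ≤ m) (hn : 1 ≤ n)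
    (hE : ∀ w : ℝ, 0 < w → 0 < E w ∧ P m (E w) = (n : ℝ) / w)
    {w : ℝ} (hw : 0 < w) (hu : 1 ≤ E w) :
    |GG n m E w| ≤ 3 / w ∧ |GG1 n m E w| ≤ 17 / w ^ 2 ∧ |GG2 n m E w| ≤ 214 / w ^ 3 := by
  have hEw : 0 < E w := (hE w hw).1
  set s0 := SS m E 0 w with hs0def
  set s1 := SS m E 1 w with hs1def
  set s2 := SS m E 2 w with hs2def
  set s3 := SS m E 3 w with hs3def
  set s4 := SS m E 4 w with hs4def
  have s0p : 0 < s0 := SS_pos 0 hm hEw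
  have s1p : 0 < s1 := SS_pos 1 hm hEw
  have s2p : 0 < s2 := SS_pos 2 hm hEw
  have s3p : 0 < s3 := SS_pos 3 hm hEw
  have s4p : 0 < s4 := SS_pos 4 hm hEw
  have hmp : (0:ℝ) < m := by exact_mod_cast hm
  have hnws : (n:ℝ) = w * s0 := by
    rw [hs0def, SS0_eq hE hw]
    field_simp
  have k1 : (m:ℝ) * s0 ≤ 2 * s1 := SS_reflect hm hu
  have k2 : s2 ≤ (m:ℝ) * s1 := SS_succ_le 1 hEw
  have k3 : s3 ≤ (m:ℝ) * s2 := SS_succ_le 2 hEw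
  have k4 : s4 ≤ (m:ℝ) * s3 := SS_succ_le 3 hEw
  have hs0le : s0 ≤ 2 * s1 / m := by
    rw [le_div_iff₀ hmp]
    linarith [k1]
  have s3m : s3 ≤ (m:ℝ)^2 * s1 := by nlinarith [k3, k2, hmp]
  have s4m : s4 ≤ (m:ℝ)^3 * s1 := by nlinarith [k4, s3m, hmp]
  have p1 : s0 * s2 ≤ 2 * s1^2 := by
    calc s0 * s2 ≤ (2 * s1 / m) * ((m:ℝ) * s1) :=
          mul_le_mul hs0le k2 s2p.le (by positivity)
      _ = 2 * s1^2 := by field_simp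
  have p2 : s0^2 * s3 ≤ 4 * s1^3 := by
    calc s0^2 * s3 ≤ (2 * s1 / m)^2 * ((m:ℝ)^2 * s1) :=
          mul_le_mul (pow_le_pow_left₀ s0p.le hs0le 2) s3m s3p.le (by positivity)
      _ = 4 * s1^3 := by field_simp; ring
  have p3 : s0^2 * s2^2 ≤ 4 * s1^4 := by
    calc s0^2 * s2^2 ≤ (2 * s1 / m)^2 * (((m:ℝ) * s1))^2 :=
          mul_le_mul (pow_le_pow_left₀ s0p.le hs0le 2)
            (pow_le_pow_left₀ s2p.le k2 2) (by positivity) (by positivity)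
      _ = 4 * s1^4 := by field_simp; ring
  have p4 : s0^3 * s4 ≤ 8 * s1^4 := by
    calc s0^3 * s4 ≤ (2 * s1 / m)^3 * ((m:ℝ)^3 * s1) :=
          mul_le_mul (pow_le_pow_left₀ s0p.le hs0le 3) s4m s4p.le (by positivity)
      _ = 8 * s1^4 := by field_simp; ring
  have p5 : s0^3 * (s2 * s3) ≤ 8 * s1^5 := by
    calc s0^3 * (s2 * s3) ≤ (2 * s1 / m)^3 * (((m:ℝ) * s1) * ((m:ℝ)^2 * s1)) :=
          mul_le_mul (pow_le_pow_left₀ s0p.le hs0le 3)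
            (mul_le_mul k2 s3m s3p.le (by positivity)) (by positivity) (by positivity)
      _ = 8 * s1^5 := by field_simp; ring
  have p6 : s0^3 * s2^3 ≤ 8 * s1^6 := by
    calc s0^3 * s2^3 ≤ (2 * s1 / m)^3 * ((m:ℝ) * s1)^3 :=
          mul_le_mul (pow_le_pow_left₀ s0p.le hs0le 3)
            (pow_le_pow_left₀ s2p.le k2 3) (by positivity) (by positivity)
      _ = 8 * s1^6 := by field_simp; ring
  have b1 : |(n:ℝ) * s2 / (w^2 * s1^2)| ≤ 2 / w := by
    rw [abs_of_nonneg (by positivity), hnws, div_le_div_iff₀ (by positivity) hw]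
    nlinarith [mul_le_mul_of_nonneg_left p1 (by positivity : (0:ℝ) ≤ w^2)]
  have b2 : |(n:ℝ)^2 * s3 / (w^4 * s1^3)| ≤ 4 / w^2 := by
    rw [abs_of_nonneg (by positivity), hnws, div_le_div_iff₀ (by positivity) (by positivity)]
    nlinarith [mul_le_mul_of_nonneg_left p2 (by positivity : (0:ℝ) ≤ w^4)]
  have b3 : |2 * (n:ℝ) * s2 / (w^3 * s1^2)| ≤ 4 / w^2 := by
    rw [abs_of_nonneg (by positivity), hnws, div_le_div_iff₀ (by positivity) (by positivity)]
    nlinarith [mul_le_mul_of_nonneg_left p1 (by positivity : (0:ℝ) ≤ w^3)]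
  have b4 : |2 * (n:ℝ)^2 * s2^2 / (w^4 * s1^4)| ≤ 8 / w^2 := by
    rw [abs_of_nonneg (by positivity), hnws, div_le_div_iff₀ (by positivity) (by positivity)]
    nlinarith [mul_le_mul_of_nonneg_left p3 (by positivity : (0:ℝ) ≤ w^4)]
  have c2 : |(n:ℝ)^3 * s4 / (w^6 * s1^4)| ≤ 8 / w^3 := by
    rw [abs_of_nonneg (by positivity), hnws, div_le_div_iff₀ (by positivity) (by positivity)]
    nlinarith [mul_le_mul_of_nonneg_left p4 (by positivity : (0:ℝ) ≤ w^6)]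
  have c3 : |6 * (n:ℝ)^2 * s3 / (w^5 * s1^3)| ≤ 24 / w^3 := by
    rw [abs_of_nonneg (by positivity), hnws, div_le_div_iff₀ (by positivity) (by positivity)]
    nlinarith [mul_le_mul_of_nonneg_left p2 (by positivity : (0:ℝ) ≤ w^5)]
  have c4 : |7 * (n:ℝ)^3 * s2 * s3 / (w^6 * s1^5)| ≤ 56 / w^3 := by
    rw [abs_of_nonneg (by positivity), hnws, div_le_div_iff₀ (by positivity) (by positivity)]
    nlinarith [mul_le_mul_of_nonneg_left p5 (by positivity : (0:ℝ) ≤ w^6)]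
  have c5 : |6 * (n:ℝ) * s2 / (w^4 * s1^2)| ≤ 12 / w^3 := by
    rw [abs_of_nonneg (by positivity), hnws, div_le_div_iff₀ (by positivity) (by positivity)]
    nlinarith [mul_le_mul_of_nonneg_left p1 (by positivity : (0:ℝ) ≤ w^3)]
  have c6 : |12 * (n:ℝ)^2 * s2^2 / (w^5 * s1^4)| ≤ 48 / w^3 := by
    rw [abs_of_nonneg (by positivity), hnws, div_le_div_iff₀ (by positivity) (by positivity)]
    nlinarith [mul_le_mul_of_nonneg_left p3 (by positivity : (0:ℝ) ≤ w^5)]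
  have c7 : |8 * (n:ℝ)^3 * s2^3 / (w^6 * s1^6)| ≤ 64 / w^3 := by
    rw [abs_of_nonneg (by positivity), hnws, div_le_div_iff₀ (by positivity) (by positivity)]
    nlinarith [mul_le_mul_of_nonneg_left p6 (by positivity : (0:ℝ) ≤ w^6)]
  have habs1 : |1 / w| = 1 / w := abs_of_pos (by positivity)
  have habs2 : |(-(1 / w^2))| = 1 / w^2 := by
    rw [abs_neg]; exact abs_of_pos (by positivity)
  have habs3 : |2 / w^3| = 2 / w^3 := abs_of_pos (by positivity)
  refine ⟨?_, ?_, ?_⟩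
  · rw [GG]
    calc |1 / w - (n:ℝ) * s2 / (w^2 * s1^2)|
        ≤ |1 / w| + |(n:ℝ) * s2 / (w^2 * s1^2)| := tri _ _
      _ ≤ 1 / w + 2 / w := by rw [habs1]; linarith [b1]
      _ = 3 / w := by ring
  · rw [GG1]
    calc |(-(1 / w^2)) + (n:ℝ)^2 * s3 / (w^4 * s1^3) + 2 * (n:ℝ) * s2 / (w^3 * s1^2)
          - 2 * (n:ℝ)^2 * s2^2 / (w^4 * s1^4)|
        ≤ |(-(1 / w^2)) + (n:ℝ)^2 * s3 / (w^4 * s1^3) + 2 * (n:ℝ) * s2 / (w^3 * s1^2)|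
          + |2 * (n:ℝ)^2 * s2^2 / (w^4 * s1^4)| := tri _ _
      _ ≤ (|(-(1 / w^2)) + (n:ℝ)^2 * s3 / (w^4 * s1^3)| + |2 * (n:ℝ) * s2 / (w^3 * s1^2)|)
          + |2 * (n:ℝ)^2 * s2^2 / (w^4 * s1^4)| := by gcongr; exact tri' _ _
      _ ≤ ((|(-(1 / w^2))| + |(n:ℝ)^2 * s3 / (w^4 * s1^3)|) + |2 * (n:ℝ) * s2 / (w^3 * s1^2)|)
          + |2 * (n:ℝ)^2 * s2^2 / (w^4 * s1^4)| := by gcongr; exact tri' _ _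
      _ ≤ ((1 / w^2 + 4 / w^2) + 4 / w^2) + 8 / w^2 :=
          add_le_add (add_le_add (add_le_add habs2.le b2) b3) b4
      _ = 17 / w^2 := by ring
  · rw [GG2]
    calc |2 / w^3 - (n:ℝ)^3 * s4 / (w^6 * s1^4) - 6 * (n:ℝ)^2 * s3 / (w^5 * s1^3)
          + 7 * (n:ℝ)^3 * s2 * s3 / (w^6 * s1^5) - 6 * (n:ℝ) * s2 / (w^4 * s1^2)
          + 12 * (n:ℝ)^2 * s2^2 / (w^5 * s1^4) - 8 * (n:ℝ)^3 * s2^3 / (w^6 * s1^6)|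
        ≤ |2 / w^3 - (n:ℝ)^3 * s4 / (w^6 * s1^4) - 6 * (n:ℝ)^2 * s3 / (w^5 * s1^3)
          + 7 * (n:ℝ)^3 * s2 * s3 / (w^6 * s1^5) - 6 * (n:ℝ) * s2 / (w^4 * s1^2)
          + 12 * (n:ℝ)^2 * s2^2 / (w^5 * s1^4)| + |8 * (n:ℝ)^3 * s2^3 / (w^6 * s1^6)| := tri _ _
      _ ≤ (|2 / w^3 - (n:ℝ)^3 * s4 / (w^6 * s1^4) - 6 * (n:ℝ)^2 * s3 / (w^5 * s1^3)
          + 7 * (n:ℝ)^3 * s2 * s3 / (w^6 * s1^5) - 6 * (n:ℝ) * s2 / (w^4 * s1^2)|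
          + |12 * (n:ℝ)^2 * s2^2 / (w^5 * s1^4)|) + |8 * (n:ℝ)^3 * s2^3 / (w^6 * s1^6)| := by
          gcongr; exact tri' _ _
      _ ≤ ((|2 / w^3 - (n:ℝ)^3 * s4 / (w^6 * s1^4) - 6 * (n:ℝ)^2 * s3 / (w^5 * s1^3)
          + 7 * (n:ℝ)^3 * s2 * s3 / (w^6 * s1^5)| + |6 * (n:ℝ) * s2 / (w^4 * s1^2)|)
          + |12 * (n:ℝ)^2 * s2^2 / (w^5 * s1^4)|) + |8 * (n:ℝ)^3 * s2^3 / (w^6 * s1^6)| := by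
          gcongr; exact tri _ _
      _ ≤ (((|2 / w^3 - (n:ℝ)^3 * s4 / (w^6 * s1^4) - 6 * (n:ℝ)^2 * s3 / (w^5 * s1^3)|
          + |7 * (n:ℝ)^3 * s2 * s3 / (w^6 * s1^5)|) + |6 * (n:ℝ) * s2 / (w^4 * s1^2)|)
          + |12 * (n:ℝ)^2 * s2^2 / (w^5 * s1^4)|) + |8 * (n:ℝ)^3 * s2^3 / (w^6 * s1^6)| := by
          gcongr; exact tri' _ _
      _ ≤ ((((|2 / w^3 - (n:ℝ)^3 * s4 / (w^6 * s1^4)| + |6 * (n:ℝ)^2 * s3 / (w^5 * s1^3)|)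
          + |7 * (n:ℝ)^3 * s2 * s3 / (w^6 * s1^5)|) + |6 * (n:ℝ) * s2 / (w^4 * s1^2)|)
          + |12 * (n:ℝ)^2 * s2^2 / (w^5 * s1^4)|) + |8 * (n:ℝ)^3 * s2^3 / (w^6 * s1^6)| := by
          gcongr; exact tri _ _
      _ ≤ (((((|2 / w^3| + |(n:ℝ)^3 * s4 / (w^6 * s1^4)|) + |6 * (n:ℝ)^2 * s3 / (w^5 * s1^3)|)
          + |7 * (n:ℝ)^3 * s2 * s3 / (w^6 * s1^5)|) + |6 * (n:ℝ) * s2 / (w^4 * s1^2)|)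
          + |12 * (n:ℝ)^2 * s2^2 / (w^5 * s1^4)|) + |8 * (n:ℝ)^3 * s2^3 / (w^6 * s1^6)| := by
          gcongr; exact tri _ _
      _ ≤ (((((2 / w^3 + 8 / w^3) + 24 / w^3) + 56 / w^3) + 12 / w^3) + 48 / w^3) + 64 / w^3 :=
          add_le_add (add_le_add (add_le_add (add_le_add (add_le_add
            (add_le_add habs3.le c2) c3) c4) c5) c6) c7
      _ = 214 / w^3 := by ring

lemma iter2 (f : ℝ → ℝ) : iteratedDeriv 2 f = deriv (deriv f) := by
  rw [show (2:ℕ) = 1 + 1 from rfl, iteratedDeriv_succ, iteratedDeriv_one]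

lemma iter3 (f : ℝ → ℝ) : iteratedDeriv 3 f = deriv (deriv (deriv f)) := by
  rw [show (3:ℕ) = 2 + 1 from rfl, iteratedDeriv_succ, iter2]

end S13


set_option maxHeartbeats 2000000 in
open Filter Real in
/-- asymptotics for the first three derivatives of `h̃_{n,α}`.
Suppose `n/(w α(n)) > 1` for all large `n` and all `w ∈ (1−δ, 1+δ)`, and
`α(n)/n → 0`.  Here `x n w = x_{n,α}(w)` is the positive solution of
`∑_{j=1}^{α(n)} x^j = n/w` and
`h̃ n w = w ∑_{j=1}^{α(n)} x(w)^j/j − n log x(w) − (1/2) log(2πw ∑ j x(w)^j)`.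
Then there are `C` and `N` such that for all `n ≥ N` and `w ∈ (1−δ, 1+δ)`:
(i) `|h̃'(w) − ∑_{j=1}^{α(n)} x(w)^j/j| ≤ C`;
(ii) `|h̃''(w) − n x'(w)/(w x(w))| ≤ C`;
(iii) `|h̃'''(w) − (n x''(w)/(w x(w)) − n x'(w)/(w² x(w)) − (n/w)(x'(w)/x(w))²)| ≤ C`. -/
theorem stmt_13 (α : ℕ → ℕ) (hα : ∀ n, 1 ≤ α n)
    (δ : ℝ) (hδ0 : 0 < δ) (hδ1 : δ < 1)
    (hbig : ∀ᶠ n : ℕ in atTop, ∀ w ∈ Set.Ioo (1 - δ) (1 + δ),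
      1 < (n : ℝ) / (w * α n))
    (hαn : Tendsto (fun n : ℕ => (α n : ℝ) / n) atTop (nhds 0))
    (x : ℕ → ℝ → ℝ)
    (hx : ∀ n, 1 ≤ n → ∀ w : ℝ, 0 < w →
      0 < x n w ∧ ∑ j ∈ Finset.Icc 1 (α n), x n w ^ j = (n : ℝ) / w)
    (h : ℕ → ℝ → ℝ)
    (hh : ∀ n, ∀ w : ℝ, 0 < w →
      h n w = w * ∑ j ∈ Finset.Icc 1 (α n), x n w ^ j / j - (n : ℝ) * Real.log (x n w)
        - 1 / 2 * Real.log (2 * π * w * ∑ j ∈ Finset.Icc 1 (α n), (j : ℝ) * x n w ^ j)) :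
    ∃ C : ℝ, ∃ N : ℕ, ∀ n ≥ N, ∀ w ∈ Set.Ioo (1 - δ) (1 + δ),
      |deriv (h n) w - ∑ j ∈ Finset.Icc 1 (α n), x n w ^ j / j| ≤ C ∧
      |iteratedDeriv 2 (h n) w - (n : ℝ) * deriv (x n) w / (w * x n w)| ≤ C ∧
      |iteratedDeriv 3 (h n) w -
          ((n : ℝ) * iteratedDeriv 2 (x n) w / (w * x n w)
            - (n : ℝ) * deriv (x n) w / (w ^ 2 * x n w)
            - (n : ℝ) / w * (deriv (x n) w / x n w) ^ 2)| ≤ C := by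
  rw [Filter.eventually_atTop] at hbig
  obtain ⟨N0, hN0⟩ := hbig
  refine ⟨214 / (1 - δ)^3, max N0 1, ?_⟩
  intro n hn w hwmem
  obtain ⟨hw1, hw2⟩ := hwmem
  have hn1 : 1 ≤ n := le_trans (le_max_right N0 1) hn
  have hm : 1 ≤ α n := hα n
  have h1δ : 0 < 1 - δ := by linarith
  have hδle : 1 - δ ≤ 1 := by linarith
  have hw : 0 < w := lt_trans h1δ hw1
  set m := α n with hmdef
  set E := x n with hEdef
  have hE : ∀ w' : ℝ, 0 < w' → 0 < E w' ∧ S13.P m (E w') = (n : ℝ) / w' := by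
    intro w' hw'
    obtain ⟨ha, hb⟩ := hx n hn1 w' hw'
    exact ⟨ha, by rw [S13.P]; exact hb⟩
  have hEw : 0 < E w := (hE w hw).1
  have hbig' := hN0 n (le_trans (le_max_left N0 1) hn) w ⟨hw1, hw2⟩
  have hu : 1 ≤ E w := by
    by_contra hcon
    push_neg at hcon
    have hs : S13.P m (E w) ≤ (m:ℝ) := by
      rw [S13.P]
      calc ∑ j ∈ Finset.Icc 1 m, E w ^ j ≤ ∑ _j ∈ Finset.Icc 1 m, (1:ℝ) :=
            Finset.sum_le_sum (fun j _ => pow_le_one₀ hEw.le hcon.le)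
        _ = (m:ℝ) := by simp
    rw [(hE w hw).2, div_le_iff₀ hw] at hs
    have hmp : (0:ℝ) < (m:ℝ) := by exact_mod_cast hm
    rw [lt_div_iff₀ (by positivity)] at hbig'
    nlinarith
  -- function identification
  have hhx : ∀ w' : ℝ, 0 < w' → h n w' = w' * S13.TT m E w' - (n:ℝ) * Real.log (E w')
      - 1 / 2 * Real.log (2 * Real.pi * w' * S13.SS m E 1 w') := by
    intro w' hw'
    rw [hh n w' hw', S13.TT, S13.SS]
    simp only [pow_one]
    rfl
  have hder1 : ∀ w' : ℝ, 0 < w' → HasDerivAt (h n) (S13.H1 n m E w') w' := by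
    intro w' hw'
    refine (S13.hasDerivAt_F hm hn1 hE hw').congr_of_eventuallyEq ?_
    exact Filter.eventuallyEq_of_mem (Ioi_mem_nhds hw') (fun y hy => hhx y hy)
  have hD1 : ∀ w' : ℝ, 0 < w' → deriv (h n) w' = S13.H1 n m E w' :=
    fun w' hw' => (hder1 w' hw').deriv
  have hD2 : ∀ w' : ℝ, 0 < w' → deriv (deriv (h n)) w' = S13.H2 n m E w' := by
    intro w' hw'
    have hev : deriv (h n) =ᶠ[nhds w'] S13.H1 n m E :=
      Filter.eventuallyEq_of_mem (Ioi_mem_nhds hw') (fun y hy => hD1 y hy)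
    rw [hev.deriv_eq]
    exact (S13.hasDerivAt_H1 hm hn1 hE hw').deriv
  have hD3 : deriv (deriv (deriv (h n))) w = S13.H3 n m E w := by
    have hev : deriv (deriv (h n)) =ᶠ[nhds w] S13.H2 n m E :=
      Filter.eventuallyEq_of_mem (Ioi_mem_nhds hw) (fun y hy => hD2 y hy)
    rw [hev.deriv_eq]
    exact (S13.hasDerivAt_H2 hm hn1 hE hw).deriv
  have hxD1 : ∀ w' : ℝ, 0 < w' → deriv E w' = S13.EE1 n m E w' :=
    fun w' hw' => (S13.hasDerivAt_E hm hn1 hE hw').deriv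
  have hxD2 : deriv (deriv E) w = S13.EE2 n m E w := by
    have hev : deriv E =ᶠ[nhds w] S13.EE1 n m E :=
      Filter.eventuallyEq_of_mem (Ioi_mem_nhds hw) (fun y hy => hxD1 y hy)
    rw [hev.deriv_eq]
    exact (S13.hasDerivAt_EE1 hm hn1 hE hw).deriv
  obtain ⟨bG, bG1, bG2⟩ := S13.GG_bound hm hn1 hE hw hu
  -- numeric facts
  have hc2 : (1 - δ)^2 ≤ 1 := by nlinarith
  have hc3 : (1 - δ)^3 ≤ 1 - δ := by nlinarith
  have hw3 : (1 - δ)^3 < w^3 := by nlinarith [pow_lt_pow_left₀ hw1 h1δ.le (by norm_num : (3:ℕ) ≠ 0)]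
  have hw2' : (1 - δ)^2 < w^2 := by nlinarith
  refine ⟨?_, ?_, ?_⟩
  · rw [hD1 w hw]
    have heq : S13.H1 n m E w - ∑ j ∈ Finset.Icc 1 m, E w ^ j / (j:ℝ)
        = -(S13.GG n m E w) / 2 := by
      rw [S13.H1, S13.TT]; ring
    rw [heq, abs_div, abs_neg]
    rw [show |(2:ℝ)| = 2 from abs_of_pos two_pos]
    calc |S13.GG n m E w| / 2 ≤ (3 / w) / 2 := by linarith
      _ ≤ 214 / (1 - δ)^3 := by
          rw [div_div, div_le_div_iff₀ (by positivity) (by positivity)]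
          nlinarith
  · rw [S13.iter2, hD2 w hw, hxD1 w hw]
    have heq : S13.H2 n m E w - (n:ℝ) * S13.EE1 n m E w / (w * E w)
        = -(S13.GG1 n m E w) / 2 := by
      rw [S13.H2]; ring
    rw [heq, abs_div, abs_neg]
    rw [show |(2:ℝ)| = 2 from abs_of_pos two_pos]
    calc |S13.GG1 n m E w| / 2 ≤ (17 / w^2) / 2 := by linarith
      _ ≤ 214 / (1 - δ)^3 := by
          rw [div_div, div_le_div_iff₀ (by positivity) (by positivity)]
          nlinarith
  · rw [S13.iter3, S13.iter2, hD3, hxD2, hxD1 w hw]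
    have heq : S13.H3 n m E w - ((n:ℝ) * S13.EE2 n m E w / (w * E w)
        - (n:ℝ) * S13.EE1 n m E w / (w^2 * E w)
        - (n:ℝ) / w * (S13.EE1 n m E w / E w)^2)
        = -(S13.GG2 n m E w) / 2 := by
      rw [S13.H3]; ring
    rw [heq, abs_div, abs_neg]
    rw [show |(2:ℝ)| = 2 from abs_of_pos two_pos]
    calc |S13.GG2 n m E w| / 2 ≤ (214 / w^3) / 2 := by linarith
      _ ≤ 214 / (1 - δ)^3 := by
          rw [div_div, div_le_div_iff₀ (by positivity) (by positivity)]
          nlinarith
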